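/- (Fundamental DGCS observation.) Let t0, m > 0 and λ > 0 be real numbers, and let ε : [t0,∞) → ℝ be a function of class C¹. Define w(t) = (1/(mλ))·sin(mλt)·exp( (1/(8m²))·∫_{t0}^t ε(s)·sin²(mλs) ds ) and c(t) = m² − (ε(t)/(4mλ))·sin(2mλt) − (ε'(t)/(8m²λ²))·sin²(mλt) − (ε(t)²/(64m⁴λ²))·sin⁴(mλt). Then w is a solution of the ordinary differential equation w''(t) + λ²·c(t)·w(t) = 0 for all t ≥ t0. -/

import Mathlib

open Real Set MeasureTheory

theorem DGCS_fundamental_observation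
    (t0 m lam : ℝ) (hm : 0 < m) (hlam : 0 < lam)
    (ε ε' : ℝ → ℝ)
    (hε : ∀ t ∈ Ici t0, HasDerivWithinAt ε (ε' t) (Ici t0) t)
    (hε'cont : ContinuousOn ε' (Ici t0))
    (w c : ℝ → ℝ)
    (hw : ∀ t, w t = 1 / (m * lam) * Real.sin (m * lam * t) *
      Real.exp (1 / (8 * m ^ 2) *
        ∫ s in t0..t, ε s * (Real.sin (m * lam * s)) ^ 2))
    (hc : ∀ t, c t = m ^ 2 -
      ε t / (4 * m * lam) * Real.sin (2 * m * lam * t) -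
      ε' t / (8 * m ^ 2 * lam ^ 2) * (Real.sin (m * lam * t)) ^ 2 -
      (ε t) ^ 2 / (64 * m ^ 4 * lam ^ 2) * (Real.sin (m * lam * t)) ^ 4) :
    ∃ w' : ℝ → ℝ,
      (∀ t ∈ Ici t0, HasDerivWithinAt w (w' t) (Ici t0) t) ∧
      (∀ t ∈ Ici t0, HasDerivWithinAt w' (-(lam ^ 2 * c t * w t)) (Ici t0) t) := by
  have hm' : m ≠ 0 := ne_of_gt hm
  have hlam' : lam ≠ 0 := ne_of_gt hlam
  have hεcont : ContinuousOn ε (Ici t0) := fun t ht => (hε t ht).continuousWithinAt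
  -- the integrand
  set g : ℝ → ℝ := fun s => ε s * Real.sin (m * lam * s) ^ 2 with hg_def
  have hgcont : ContinuousOn g (Ici t0) := by
    apply hεcont.mul
    exact (((Real.continuous_sin.comp (continuous_const.mul continuous_id)).pow 2)).continuousOn
  -- derivative of the integral
  have hFd : ∀ t ∈ Ici t0, HasDerivWithinAt (fun u => ∫ s in t0..u, g s) (g t) (Ici t0) t := by
    intro t ht
    have hint : IntervalIntegrable g volume t0 t := by
      apply (hgcont.mono ?_).intervalIntegrable
      rw [uIcc_of_le ht]
      exact Icc_subset_Ici_self
    rcases eq_or_lt_of_le (mem_Ici.mp ht) with heq | hlt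
    · subst heq
      exact intervalIntegral.integral_hasDerivWithinAt_right hint
        ((hgcont.mono Ioi_subset_Ici_self).stronglyMeasurableAtFilter_nhdsWithin measurableSet_Ioi t0)
        ((hgcont t0 self_mem_Ici).mono Ioi_subset_Ici_self)
    · have hmem : Ici t0 ∈ nhds t := Ici_mem_nhds hlt
      exact (intervalIntegral.integral_hasDerivAt_right hint
        ⟨Ici t0, hmem, hgcont.aestronglyMeasurable measurableSet_Ici⟩
        (hgcont.continuousAt hmem)).hasDerivWithinAt
  -- the exponential factor
  set E : ℝ → ℝ := fun t => Real.exp (1 / (8 * m ^ 2) * ∫ s in t0..t, g s) with hE_def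
  have hEd : ∀ t ∈ Ici t0, HasDerivWithinAt E (E t * (1 / (8 * m ^ 2) * g t)) (Ici t0) t :=
    fun t ht => ((hFd t ht).const_mul (1 / (8 * m ^ 2))).exp
  -- sin and cos derivatives
  have hsin : ∀ t : ℝ, HasDerivAt (fun u => Real.sin (m * lam * u))
      (Real.cos (m * lam * t) * (m * lam)) t := by
    intro t
    simpa using ((hasDerivAt_id t).const_mul (m * lam)).sin
  have hcos : ∀ t : ℝ, HasDerivAt (fun u => Real.cos (m * lam * u))
      (-Real.sin (m * lam * t) * (m * lam)) t := by
    intro t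
    simpa using ((hasDerivAt_id t).const_mul (m * lam)).cos
  -- rewrite w and c
  have hwfun : w = fun t => 1 / (m * lam) * Real.sin (m * lam * t) * E t := funext hw
  subst hwfun
  have hcfun : c = fun t => m ^ 2 -
      ε t / (4 * m * lam) * Real.sin (2 * m * lam * t) -
      ε' t / (8 * m ^ 2 * lam ^ 2) * (Real.sin (m * lam * t)) ^ 2 -
      (ε t) ^ 2 / (64 * m ^ 4 * lam ^ 2) * (Real.sin (m * lam * t)) ^ 4 := funext hc
  subst hcfun
  refine ⟨fun t => Real.cos (m * lam * t) * E t +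
      ε t * Real.sin (m * lam * t) ^ 3 * E t / (8 * m ^ 3 * lam), ?_, ?_⟩
  · intro t ht
    have h1 : HasDerivWithinAt (fun u => 1 / (m * lam) * Real.sin (m * lam * u) * E u)
        ((1 / (m * lam) * (Real.cos (m * lam * t) * (m * lam))) * E t +
          1 / (m * lam) * Real.sin (m * lam * t) * (E t * (1 / (8 * m ^ 2) * g t))) (Ici t0) t :=
      (((hsin t).const_mul (1 / (m * lam))).hasDerivWithinAt.mul (hEd t ht))
    convert h1 using 1
    simp only [hg_def]
    field_simp
  · intro t ht
    have h2 : HasDerivWithinAt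
        (fun u => Real.cos (m * lam * u) * E u +
          ε u * Real.sin (m * lam * u) ^ 3 * E u / (8 * m ^ 3 * lam))
        (((-Real.sin (m * lam * t) * (m * lam)) * E t +
            Real.cos (m * lam * t) * (E t * (1 / (8 * m ^ 2) * g t))) +
          (((ε' t * Real.sin (m * lam * t) ^ 3 +
              ε t * ((3 : ℕ) * Real.sin (m * lam * t) ^ 2 * (Real.cos (m * lam * t) * (m * lam)))) * E t +
            ε t * Real.sin (m * lam * t) ^ 3 * (E t * (1 / (8 * m ^ 2) * g t))) / (8 * m ^ 3 * lam)))
        (Ici t0) t := by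
      apply HasDerivWithinAt.add
      · exact (hcos t).hasDerivWithinAt.mul (hEd t ht)
      · apply HasDerivWithinAt.div_const
        exact (((hε t ht).mul ((hsin t).hasDerivWithinAt.pow 3)).mul (hEd t ht))
    convert h2 using 1
    have h2m : Real.sin (2 * m * lam * t) = 2 * Real.sin (m * lam * t) * Real.cos (m * lam * t) := by
      have : 2 * m * lam * t = 2 * (m * lam * t) := by ring
      rw [this, Real.sin_two_mul]
    simp only [hg_def, h2m]
    field_simp
    ring
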